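/- Let {B_{3r}(x_i)}_{i∈I} be a collection of balls in a Banach space X such that every point of X belongs to at most Γ of the balls B_{3r}(x_i). Then there exist Lipschitz functions φ_i : X → [0,1] with supp φ_i ⊆ B_{3r}(x_i), Σ_i φ_i = 1 on ∪_i B_{2.5 r}(x_i), Σ_i φ_i ≤ 1 everywhere, and Lip(φ_i) ≤ γΓ/r for an absolute constant γ. -/

import Mathlib

open Metric

/-- Truncated partition of unity subordinate to a family of balls with bounded
overlap, with Lipschitz constants `γ·Γ/r` for an absolute constant `γ`. -/
theorem truncated_partition_of_unity :
    ∃ γ : ℝ, 0 < γ ∧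
      ∀ (X : Type) [NormedAddCommGroup X] [NormedSpace ℝ X] [CompleteSpace X]
        (ι : Type) (x : ι → X) (r : ℝ), 0 < r → ∀ Γ : ℕ, 0 < Γ →
        (∀ p : X, {i : ι | p ∈ ball (x i) (3 * r)}.Finite) →
        (∀ p : X, {i : ι | p ∈ ball (x i) (3 * r)}.ncard ≤ Γ) →
        ∃ φ : ι → X → ℝ,
          (∀ i p, φ i p ∈ Set.Icc (0 : ℝ) 1) ∧
          (∀ i, Function.support (φ i) ⊆ ball (x i) (3 * r)) ∧
          (∀ p ∈ ⋃ i, ball (x i) (2.5 * r), ∑' i, φ i p = 1) ∧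
          (∀ p : X, ∑' i, φ i p ≤ 1) ∧
          (∀ i, LipschitzWith (Real.toNNReal (γ * Γ / r)) (φ i)) := by
  refine ⟨6, by norm_num, ?_⟩
  intro X _ _ _ ι x r hr Γ hΓ hfin hcard
  classical
  have hΓ1 : (1 : ℝ) ≤ (Γ : ℝ) := by exact_mod_cast hΓ
  -- bump functions
  set ψ : ι → X → ℝ := fun i p => max 0 (min 1 (2 / r * (3 * r - dist p (x i)))) with hψdef
  have hψ0le : ∀ i p, 0 ≤ ψ i p := fun i p => le_max_left _ _
  have hψle1 : ∀ i p, ψ i p ≤ 1 := fun i p => max_le (by norm_num) (min_le_left _ _)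
  have hψ0 : ∀ i p, 3 * r ≤ dist p (x i) → ψ i p = 0 := by
    intro i p h
    have h1 : 2 / r * (3 * r - dist p (x i)) ≤ 0 :=
      mul_nonpos_of_nonneg_of_nonpos (by positivity) (by linarith)
    exact max_eq_left ((min_le_right _ _).trans h1)
  have hψ1 : ∀ i p, dist p (x i) ≤ 2.5 * r → ψ i p = 1 := by
    intro i p h
    have h1 : (1 : ℝ) ≤ 2 / r * (3 * r - dist p (x i)) := by
      rw [div_mul_eq_mul_div, le_div_iff₀ hr]; nlinarith
    have : min 1 (2 / r * (3 * r - dist p (x i))) = 1 := min_eq_left h1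
    rw [hψdef]; simp only [this]; norm_num
  have hψlip : ∀ i p q, |ψ i p - ψ i q| ≤ 2 / r * dist p q := by
    intro i p q
    have h1 : |ψ i p - ψ i q| ≤
        |min 1 (2 / r * (3 * r - dist p (x i))) - min 1 (2 / r * (3 * r - dist q (x i)))| := by
      simpa [max_comm] using abs_max_sub_max_le_abs
        (min 1 (2 / r * (3 * r - dist p (x i)))) (min 1 (2 / r * (3 * r - dist q (x i)))) 0
    have h2 : |min 1 (2 / r * (3 * r - dist p (x i))) - min 1 (2 / r * (3 * r - dist q (x i)))|
        ≤ |2 / r * (3 * r - dist p (x i)) - 2 / r * (3 * r - dist q (x i))| := by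
      simpa using abs_min_sub_min_le_max
        1 (2 / r * (3 * r - dist p (x i))) 1 (2 / r * (3 * r - dist q (x i)))
    have h3 : |2 / r * (3 * r - dist p (x i)) - 2 / r * (3 * r - dist q (x i))|
        = 2 / r * |dist q (x i) - dist p (x i)| := by
      rw [← mul_sub, abs_mul, abs_of_nonneg (by positivity : (0:ℝ) ≤ 2 / r)]
      ring_nf
    have h4 : |dist q (x i) - dist p (x i)| ≤ dist p q := by
      rw [abs_sub_comm]; exact abs_dist_sub_le _ _ _
    calc |ψ i p - ψ i q| ≤ _ := h1
      _ ≤ _ := h2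
      _ = 2 / r * |dist q (x i) - dist p (x i)| := h3
      _ ≤ 2 / r * dist p q := by
          exact mul_le_mul_of_nonneg_left h4 (by positivity)
  -- finite index sets
  set F : X → Finset ι := fun p => (hfin p).toFinset with hFdef
  have hFmem : ∀ p i, i ∈ F p ↔ dist p (x i) < 3 * r := by
    intro p i; rw [hFdef]; simp [Set.Finite.mem_toFinset, mem_ball]
  have hψ0' : ∀ p i, i ∉ F p → ψ i p = 0 := by
    intro p i hi
    exact hψ0 i p (not_lt.mp (fun h => hi ((hFmem p i).mpr h)))
  have hFcard : ∀ p, (F p).card ≤ Γ := by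
    intro p
    have := hcard p
    rwa [Set.ncard_eq_toFinset_card _ (hfin p)] at this
  -- sums
  set S : X → ℝ := fun p => ∑ i ∈ F p, ψ i p with hSdef
  have hS0 : ∀ p, 0 ≤ S p := fun p => Finset.sum_nonneg fun i _ => hψ0le i p
  have hSext : ∀ p (t : Finset ι), F p ⊆ t → S p = ∑ i ∈ t, ψ i p := by
    intro p t ht
    exact Finset.sum_subset ht (fun i _ hi => hψ0' p i hi)
  have hSlip : ∀ p q, |S p - S q| ≤ 4 * Γ / r * dist p q := by
    intro p q
    have hp : S p = ∑ i ∈ F p ∪ F q, ψ i p := hSext p _ Finset.subset_union_left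
    have hq : S q = ∑ i ∈ F p ∪ F q, ψ i q := hSext q _ Finset.subset_union_right
    have hcardu : ((F p ∪ F q).card : ℝ) ≤ 2 * Γ := by
      have := (Finset.card_union_le (F p) (F q)).trans
        (add_le_add (hFcard p) (hFcard q))
      push_cast
      exact_mod_cast le_trans (Nat.cast_le.mpr this) (by push_cast; linarith)
    calc |S p - S q| = |∑ i ∈ F p ∪ F q, (ψ i p - ψ i q)| := by
          rw [hp, hq, Finset.sum_sub_distrib]
      _ ≤ ∑ i ∈ F p ∪ F q, |ψ i p - ψ i q| := Finset.abs_sum_le_sum_abs _ _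
      _ ≤ ∑ _i ∈ F p ∪ F q, 2 / r * dist p q :=
          Finset.sum_le_sum fun i _ => hψlip i p q
      _ = ((F p ∪ F q).card : ℝ) * (2 / r * dist p q) := by
          rw [Finset.sum_const, nsmul_eq_mul]
      _ ≤ 2 * Γ * (2 / r * dist p q) := by
          apply mul_le_mul_of_nonneg_right hcardu (by positivity)
      _ = 4 * Γ / r * dist p q := by ring
  set M : X → ℝ := fun p => max (S p) 1 with hMdef
  have hM1 : ∀ p, 1 ≤ M p := fun p => le_max_right _ _
  have hM0 : ∀ p, 0 < M p := fun p => lt_of_lt_of_le one_pos (hM1 p)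
  have hMS : ∀ p, S p ≤ M p := fun p => le_max_left _ _
  have hMlip : ∀ p q, |M p - M q| ≤ 4 * Γ / r * dist p q := by
    intro p q
    exact (abs_max_sub_max_le_abs (S p) (S q) 1).trans (hSlip p q)
  refine ⟨fun i p => ψ i p / M p, ?_, ?_, ?_, ?_, ?_⟩
  · intro i p
    exact ⟨div_nonneg (hψ0le i p) (hM0 p).le,
      (div_le_one (hM0 p)).mpr ((hψle1 i p).trans (hM1 p))⟩
  · intro i p hp
    simp only [Function.mem_support] at hp
    by_contra hb
    rw [mem_ball] at hb
    exact hp (by rw [hψ0 i p (not_lt.mp hb), zero_div])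
  · intro p hp
    obtain ⟨_, ⟨i₀, rfl⟩, hpi⟩ := hp
    rw [mem_ball] at hpi
    have hψi₀ : ψ i₀ p = 1 := hψ1 i₀ p (by linarith [hpi])
    have hi₀F : i₀ ∈ F p := (hFmem p i₀).mpr (by linarith [hpi, hr])
    have hS1 : 1 ≤ S p := by
      rw [← hψi₀]
      exact Finset.single_le_sum (fun i _ => hψ0le i p) hi₀F
    have hMeq : M p = S p := max_eq_left hS1
    have htsum : ∑' i, ψ i p / M p = ∑ i ∈ F p, ψ i p / M p :=
      tsum_eq_sum (fun i hi => by rw [hψ0' p i hi, zero_div])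
    rw [htsum, ← Finset.sum_div]
    show S p / M p = 1
    rw [hMeq, div_self (by linarith : S p ≠ 0)]
  · intro p
    have htsum : ∑' i, ψ i p / M p = ∑ i ∈ F p, ψ i p / M p :=
      tsum_eq_sum (fun i hi => by rw [hψ0' p i hi, zero_div])
    rw [htsum, ← Finset.sum_div]
    show S p / M p ≤ 1
    exact (div_le_one (hM0 p)).mpr (hMS p)
  · intro i
    have hc : (0:ℝ) ≤ 6 * Γ / r := by positivity
    refine LipschitzWith.of_dist_le_mul fun p q => ?_
    rw [Real.coe_toNNReal _ hc, Real.dist_eq]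
    show |ψ i p / M p - ψ i q / M q| ≤ 6 * Γ / r * dist p q
    have hid : ψ i p / M p - ψ i q / M q
        = (ψ i p - ψ i q) / M p + ψ i q * (M q - M p) / (M p * M q) := by
      have hMp := (hM0 p).ne'
      have hMq := (hM0 q).ne'
      rw [div_add_div _ _ hMp (mul_ne_zero hMp hMq), div_sub_div _ _ hMp hMq,
        div_eq_div_iff (mul_ne_zero hMp hMq) (mul_ne_zero hMp (mul_ne_zero hMp hMq))]
      ring
    have h1 : |(ψ i p - ψ i q) / M p| ≤ 2 * Γ / r * dist p q := by
      rw [abs_div, abs_of_pos (hM0 p)]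
      have ha : |ψ i p - ψ i q| / M p ≤ |ψ i p - ψ i q| :=
        div_le_self (abs_nonneg _) (hM1 p)
      have hb : 2 / r * dist p q ≤ 2 * Γ / r * dist p q := by
        have h2Γ : (2:ℝ) ≤ 2 * Γ := by linarith
        gcongr
      exact ha.trans ((hψlip i p q).trans hb)
    have h2 : |ψ i q * (M q - M p) / (M p * M q)| ≤ 4 * Γ / r * dist p q := by
      rw [abs_div, abs_mul]
      have hMpq : 1 ≤ M p * M q := one_le_mul_of_one_le_of_one_le (hM1 p) (hM1 q)
      have hnum : |ψ i q| * |M q - M p| ≤ 4 * Γ / r * dist p q := by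
        calc |ψ i q| * |M q - M p| ≤ 1 * |M q - M p| := by
              apply mul_le_mul_of_nonneg_right _ (abs_nonneg _)
              rw [abs_of_nonneg (hψ0le i q)]; exact hψle1 i q
          _ = |M q - M p| := one_mul _
          _ = |M p - M q| := abs_sub_comm _ _
          _ ≤ 4 * Γ / r * dist p q := hMlip p q
      calc |ψ i q| * |M q - M p| / |M p * M q|
            ≤ |ψ i q| * |M q - M p| :=
            div_le_self (by positivity) (by rwa [abs_of_pos (by positivity)])
        _ ≤ 4 * Γ / r * dist p q := hnum
    calc |ψ i p / M p - ψ i q / M q|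
        = |(ψ i p - ψ i q) / M p + ψ i q * (M q - M p) / (M p * M q)| := by rw [hid]
      _ ≤ |(ψ i p - ψ i q) / M p| + |ψ i q * (M q - M p) / (M p * M q)| := abs_add_le _ _
      _ ≤ 2 * Γ / r * dist p q + 4 * Γ / r * dist p q := add_le_add h1 h2
      _ = 6 * Γ / r * dist p q := by ring
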